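/- Let (X, μ) be a finite measure space and let ρ₁, ..., ρₙ : X → ℝ be continuous (or measurable) positive functions with (∫ ρ₁⋯ρₙ dμ)ⁿ = (∫ ρ₁ⁿ dμ)⋯(∫ ρₙⁿ dμ). If all integrals are positive and finite, then the functions are pairwise proportional: for each i, j there exists a constant c > 0 with ρᵢ = c·ρⱼ μ-almost everywhere. -/

import Mathlib

open MeasureTheory

/-- AM–GM for positive reals, with the natural-power normalization used below. -/
lemma amgm_le_aux {n : ℕ} (hn : 0 < n) (g : Fin n → ℝ) (hg : ∀ i, 0 < g i) :
    ∏ i, g i ≤ (∑ i, g i ^ n) / n := by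
  have h := Real.geom_mean_le_arith_mean_weighted Finset.univ (fun _ => 1 / (n : ℝ))
    (fun i => g i ^ n) (fun i _ => one_div_nonneg.mpr (Nat.cast_nonneg n))
    (by
      have hnR : ((n:ℝ)) ≠ 0 := by exact_mod_cast hn.ne'
      simp only [Finset.sum_const, Finset.card_univ, Fintype.card_fin, nsmul_eq_mul]
      field_simp)
    (fun i _ => pow_nonneg (hg i).le n)
  have hL : ∀ i : Fin n, (g i ^ n) ^ ((1 : ℝ) / n) = g i := by
    intro i
    rw [← Real.rpow_natCast (g i) n, ← Real.rpow_mul (hg i).le]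
    rw [mul_one_div, div_self (by exact_mod_cast hn.ne')]
    exact Real.rpow_one _
  calc ∏ i, g i = ∏ i, (g i ^ n) ^ ((1 : ℝ) / n) := by
        exact Finset.prod_congr rfl fun i _ => (hL i).symm
    _ ≤ ∑ i, (1 / (n : ℝ)) * g i ^ n := h
    _ = (∑ i, g i ^ n) / n := by rw [← Finset.mul_sum]; ring

/-- Equality case of AM–GM. -/
lemma amgm_eq_aux {n : ℕ} (hn : 0 < n) (g : Fin n → ℝ) (hg : ∀ i, 0 < g i)
    (h : (∑ i, g i ^ n) / n ≤ ∏ i, g i) : ∀ i j, g i = g j := by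
  have hnR : (0 : ℝ) < n := by exact_mod_cast hn
  haveI : Nonempty (Fin n) := Fin.pos_iff_nonempty.mp hn
  have hw : ∑ _i : Fin n, (1 : ℝ) / n = 1 := by
    simp only [Finset.sum_const, Finset.card_univ, Fintype.card_fin, nsmul_eq_mul]
    field_simp
  have hkey : Real.log (∑ i : Fin n, (1 / (n : ℝ)) • (g i ^ n))
      ≤ ∑ i : Fin n, (1 / (n : ℝ)) • Real.log (g i ^ n) := by
    have hsum : ∑ i : Fin n, (1 / (n : ℝ)) • (g i ^ n) = (∑ i, g i ^ n) / n := by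
      simp only [smul_eq_mul, ← Finset.mul_sum]; ring
    have hrhs : ∑ i : Fin n, (1 / (n : ℝ)) • Real.log (g i ^ n)
        = Real.log (∏ i, g i) := by
      rw [Real.log_prod (fun i _ => (hg i).ne')]
      refine Finset.sum_congr rfl fun i _ => ?_
      rw [Real.log_pow, smul_eq_mul]
      field_simp
    rw [hsum, hrhs]
    exact Real.log_le_log
      (div_pos (Finset.sum_pos (fun i _ => pow_pos (hg i) n) Finset.univ_nonempty) hnR) h
  have := strictConcaveOn_log_Ioi.eq_of_map_sum_eq
    (t := Finset.univ) (w := fun _ : Fin n => (1 : ℝ) / n) (p := fun i => g i ^ n)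
    (fun i _ => one_div_pos.mpr hnR) hw
    (fun i _ => Set.mem_Ioi.mpr (pow_pos (hg i) n)) hkey
  intro i j
  have h2 : g i ^ n = g j ^ n := this (Finset.mem_univ i) (Finset.mem_univ j)
  exact (pow_left_inj₀ (hg i).le (hg j).le hn.ne').mp h2

/-- Equality case of the main inequality for dual mixed volumes: if the generalized
Hölder inequality is an equality, the functions are pairwise proportional a.e. -/
theorem stmt_1 {X : Type*} [MeasurableSpace X] (μ : Measure X) [IsFiniteMeasure μ]
    (n : ℕ) (hn : 0 < n) (ρ : Fin n → X → ℝ)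
    (hmeas : ∀ i, Measurable (ρ i))
    (hpos : ∀ i x, 0 < ρ i x)
    (hLn : ∀ i, MemLp (ρ i) n μ)
    (hprod : Integrable (fun x => ∏ i, ρ i x) μ)
    (hintpos : ∀ i, 0 < ∫ x, (ρ i x) ^ n ∂μ)
    (heq : (∫ x, ∏ i, ρ i x ∂μ) ^ n = ∏ i, ∫ x, (ρ i x) ^ n ∂μ) :
    ∀ i j, ∃ c : ℝ, 0 < c ∧ ρ i =ᵐ[μ] fun x => c * ρ j x := by
  set I : Fin n → ℝ := fun i => ∫ x, (ρ i x) ^ n ∂μ with hI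
  set c : Fin n → ℝ := fun i => (I i) ^ ((1 : ℝ) / n) with hc
  have hcpos : ∀ i, 0 < c i := fun i => Real.rpow_pos_of_pos (hintpos i) _
  have hcn : ∀ i, c i ^ n = I i := by
    intro i
    rw [hc, ← Real.rpow_natCast ((I i) ^ ((1:ℝ)/n)) n, ← Real.rpow_mul (hintpos i).le]
    rw [one_div_mul_cancel (by exact_mod_cast hn.ne'), Real.rpow_one]
  -- the integral of the product equals ∏ c i
  have hcprod : ∫ x, ∏ i, ρ i x ∂μ = ∏ i, c i := by
    have h1 : (∫ x, ∏ i, ρ i x ∂μ) ^ n = (∏ i, c i) ^ n := by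
      rw [heq, ← Finset.prod_pow]
      exact (Finset.prod_congr rfl fun i _ => (hcn i).symm)
    have h2 : 0 ≤ ∫ x, ∏ i, ρ i x ∂μ :=
      integral_nonneg fun x => Finset.prod_nonneg fun i _ => (hpos i x).le
    have h3 : 0 ≤ ∏ i, c i := Finset.prod_nonneg fun i _ => (hcpos i).le
    exact (pow_left_inj₀ h2 h3 hn.ne').mp h1
  have hcprodpos : 0 < ∏ i, c i := Finset.prod_pos fun i _ => hcpos i
  -- integrability of ρ i ^ n
  have hIint : ∀ i, Integrable (fun x => (ρ i x) ^ n) μ := by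
    intro i
    have := (hLn i).integrable_norm_rpow (by exact_mod_cast hn.ne') (by simp)
    refine this.congr (Filter.Eventually.of_forall fun x => ?_)
    simp only [Real.norm_eq_abs, abs_of_pos (hpos i x)]
    rw [show ((n : ENNReal)).toReal = (n : ℝ) by simp, Real.rpow_natCast]
  -- the AM-GM defect function
  set F : X → ℝ := fun x => (∑ i, (ρ i x) ^ n / I i) / n - (∏ i, ρ i x) / ∏ i, c i
    with hF
  have hF0 : ∀ x, 0 ≤ F x := by
    intro x
    have h := amgm_le_aux hn (fun i => ρ i x / c i) (fun i => div_pos (hpos i x) (hcpos i))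
    simp only [div_pow, Finset.prod_div_distrib] at h
    have h2 : ∀ i : Fin n, ρ i x ^ n / c i ^ n = ρ i x ^ n / I i := by
      intro i; rw [hcn]
    simp only [h2] at h
    simpa [hF, sub_nonneg] using h
  have hsumint : Integrable (fun x => ∑ i, (ρ i x) ^ n / I i) μ :=
    integrable_finset_sum _ fun i _ => (hIint i).div_const _
  have hFint : Integrable F μ := ((hsumint.div_const _).sub (hprod.div_const _))
  have hFzero : ∫ x, F x ∂μ = 0 := by
    rw [hF]
    rw [integral_sub (hsumint.div_const _) (hprod.div_const _)]
    rw [integral_div, integral_div, integral_finset_sum _ fun i _ => (hIint i).div_const _]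
    have : ∀ i : Fin n, ∫ x, (ρ i x) ^ n / I i ∂μ = 1 := by
      intro i
      rw [integral_div, div_self (hintpos i).ne']
    simp only [this, Finset.sum_const, Finset.card_univ, Fintype.card_fin, nsmul_eq_mul,
      mul_one, hcprod]
    rw [div_self hcprodpos.ne', div_self (by exact_mod_cast hn.ne' : (n:ℝ) ≠ 0)]
    ring
  have hFae : F =ᵐ[μ] 0 := by
    rw [← integral_eq_zero_iff_of_nonneg_ae (Filter.Eventually.of_forall hF0) hFint]
    exact hFzero
  intro i j
  refine ⟨c i / c j, div_pos (hcpos i) (hcpos j), ?_⟩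
  filter_upwards [hFae] with x hx
  have hx' : (∑ k, (ρ k x) ^ n / I k) / n = (∏ k, ρ k x) / ∏ k, c k := by
    have : F x = 0 := hx
    rw [hF] at this
    linarith [this]
  -- rewrite as the AM-GM equality for g k = ρ k x / c k
  have heqg : (∑ k, (ρ k x / c k) ^ n) / n ≤ ∏ k, (ρ k x / c k) := by
    have h2 : ∀ k : Fin n, (ρ k x / c k) ^ n = ρ k x ^ n / I k := by
      intro k; rw [div_pow, hcn]
    rw [Finset.prod_div_distrib]
    simp only [h2]
    rw [hx']
  have := amgm_eq_aux hn (fun k => ρ k x / c k)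
    (fun k => div_pos (hpos k x) (hcpos k)) heqg i j
  have hcj : ρ i x / c i = ρ j x / c j := this
  have h' : ρ i x * c j = ρ j x * c i :=
    (div_eq_div_iff (hcpos i).ne' (hcpos j).ne').mp hcj
  rw [div_mul_eq_mul_div, eq_div_iff (hcpos j).ne']
  linear_combination h'
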